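/- arXiv:2302.06273 — 2 statements merged into one kernel-verified Lean document; each statement's English description precedes it below -/
import Mathlib

section
/- Every small category C that admits all α-small (weighted) limits is Cauchy complete; consequently every absolute weight lies in the saturation of the class of α-small weights. -/
set_option linter.unusedVariables false

open CategoryTheory CategoryTheory.Limits Opposite

universe w w' v v' u

namespace Paper

/-! ### Weighted (co)limits in the `Set`-enriched case -/

/-- The canonical diagram whose conical colimit computes the `M`-weighted colimit of `H`. -/
abbrev elemDiagram {C : Type u} [SmallCategory C] (M : Cᵒᵖ ⥤ Type u)
    {A : Type w} [Category.{v} A] (H : C ⥤ A) : M.Elementsᵒᵖ ⥤ A :=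
  (CategoryOfElements.π M).leftOp ⋙ H

/-- The `M`-weighted colimit of `H`. -/
noncomputable abbrev wcolim {C : Type u} [SmallCategory C] (M : Cᵒᵖ ⥤ Type u)
    {A : Type w} [Category.{v} A] (H : C ⥤ A) [HasColimit (elemDiagram M H)] : A :=
  colimit (elemDiagram M H)

/-- The functor `M ⋆ (−) : [C, Set] ⥤ Set`. -/
noncomputable def wcolimF {C : Type u} [SmallCategory C] (M : Cᵒᵖ ⥤ Type u) :
    (C ⥤ Type u) ⥤ Type u :=
  (Functor.whiskeringLeft _ _ _).obj (CategoryOfElements.π M).leftOp ⋙ colim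

/-- The functor `(−) ⋆ F : [Bᵒᵖ, Set] ⥤ Set` for a covariant weight `F : B ⥤ Set`. -/
noncomputable def costarF {B : Type u} [SmallCategory B] (F : B ⥤ Type u) :
    (Bᵒᵖ ⥤ Type u) ⥤ Type u :=
  wcolimF (C := Bᵒᵖ) (unopUnop B ⋙ F)

/-! ### Cardinal-indexed smallness, filteredness, flatness, accessibility -/

/-- A small category `D` is `α`-small if it has fewer than `α` arrows. -/
def AlphaSmall (α : Cardinal.{u}) (D : Type u) [SmallCategory D] : Prop :=
  Cardinal.mk (Arrow D) < α

/-- `α`-filteredness: every `α`-small diagram admits a cocone. -/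
def IsAlphaFiltered (α : Cardinal.{u}) (D : Type w) [Category.{v} D] : Prop :=
  ∀ (S : Type u) [iS : SmallCategory S], AlphaSmall α S → ∀ F : S ⥤ D, Nonempty (Cocone F)

/-- `F : B ⥤ Set` is `α`-flat if `(−) ⋆ F` preserves `α`-small limits. -/
def AlphaFlat (α : Cardinal.{u}) {B : Type u} [SmallCategory B] (F : B ⥤ Type u) : Prop :=
  ∀ (D : Type u) [iD : SmallCategory D], AlphaSmall α D →
    PreservesLimitsOfShape D (costarF F)

/-- An object `X` is `α`-presentable if its hom-functor preserves `α`-filtered colimits. -/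
def AlphaPresentable (α : Cardinal.{u}) {A : Type w} [Category.{v} A] (X : A) : Prop :=
  ∀ (D : Type u) [iD : SmallCategory D], IsAlphaFiltered α D →
    PreservesColimitsOfShape D (coyoneda.obj (op X))

/-- A category is `α`-accessible if it has `α`-filtered (= `α`-flat) colimits and is
equivalent to the category of `α`-flat set-valued functors on some small category. -/
def AlphaAccessible (α : Cardinal.{u}) (A : Type w) [Category.{v} A] : Prop :=
  (∀ (D : Type u) [iD : SmallCategory D], IsAlphaFiltered α D → HasColimitsOfShape D A) ∧
  ∃ B : Cat.{u, u}, Nonempty (A ≌ ObjectProperty.FullSubcategory (fun F : B ⥤ Type u => AlphaFlat α F))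

/-- A functor preserves `α`-flat colimits (in the ordinary case, `α`-filtered colimits). -/
def PreservesAlphaFlatColimits (α : Cardinal.{u}) {A : Type w} [Category.{v} A]
    {K : Type w'} [Category.{v'} K] (F : A ⥤ K) : Prop :=
  ∀ (D : Type u) [iD : SmallCategory D], IsAlphaFiltered α D →
    PreservesColimitsOfShape D F

/-- A functor is `α`-continuous: it preserves `α`-small limits. -/
def AlphaContinuous (α : Cardinal.{u}) {A : Type w} [Category.{v} A]
    {K : Type w'} [Category.{v'} K] (F : A ⥤ K) : Prop :=
  ∀ (D : Type u) [iD : SmallCategory D], AlphaSmall α D → PreservesLimitsOfShape D F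

/-! ### Classes of limits -/

/-- A class of limit shapes. -/
def ShapeClass : Type (u + 1) :=
  ∀ (D : Type u), SmallCategory D → Prop

/-- A category has `Ψ`-limits. -/
def PsiComplete (Psi : ShapeClass.{u}) (A : Type w) [Category.{v} A] : Prop :=
  ∀ (D : Type u) [iD : SmallCategory D], Psi D iD → HasLimitsOfShape D A

/-- A functor is `Ψ`-continuous. -/
def PsiContinuous (Psi : ShapeClass.{u}) {A : Type w} [Category.{v} A]
    {K : Type w'} [Category.{v'} K] (F : A ⥤ K) : Prop :=
  ∀ (D : Type u) [iD : SmallCategory D], Psi D iD → PreservesLimitsOfShape D F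

/-! ### Colimit types -/

/-- A colimit type assigns to each weight a replete full subcategory of diagrams. -/
def ColimitType : Type (u + 1) :=
  ∀ (C : Type u) (iC : SmallCategory C), (Cᵒᵖ ⥤ Type u) → Set (C ⥤ Type u)

/-- `(M, H)` is a diagram of type `𝖢` in the functor category `[B, Set]`. -/
def IsCDiagram (Ct : ColimitType.{u}) {C : Type u} [iC : SmallCategory C]
    (M : Cᵒᵖ ⥤ Type u) {B : Type w} [Category.{u} B] (H : C ⥤ (B ⥤ Type u)) : Prop :=
  ∀ b : B, H ⋙ (evaluation B (Type u)).obj b ∈ Ct C iC M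

/-- A subcategory of a functor category is closed under colimits of type `𝖢`. -/
def ClosedUnderC (Ct : ColimitType.{u}) {B : Type w} [Category.{u} B]
    (S : Set (B ⥤ Type u)) : Prop :=
  ∀ (C : Type u) [iC : SmallCategory C] (M : Cᵒᵖ ⥤ Type u) (H : C ⥤ (B ⥤ Type u)),
    IsCDiagram Ct M H → (∀ c : C, H.obj c ∈ S) → wcolim M H ∈ S

/-- The closure of a family of generators under colimits of type `𝖢` (and isomorphisms). -/
def CClosureIn (Ct : ColimitType.{u}) {B : Type w} [Category.{u} B]
    (gens : Set (B ⥤ Type u)) : Set (B ⥤ Type u) :=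
  ⋂₀ {S | gens ⊆ S ∧ (∀ X Y : B ⥤ Type u, Nonempty (X ≅ Y) → X ∈ S → Y ∈ S) ∧
      ClosedUnderC Ct S}

/-- `𝖢A`: the closure of the representables under `𝖢`-colimits inside presheaves on `A`. -/
def CClosure (Ct : ColimitType.{u}) (A : Type w) [Category.{u} A] :
    Set (Aᵒᵖ ⥤ Type u) :=
  CClosureIn Ct {X | ∃ a : A, Nonempty (X ≅ yoneda.obj a)}

/-- `𝖢(Aᵒᵖ)`: the closure of the corepresentables under `𝖢`-colimits in `[A, Set]`. -/
def CoCClosure (Ct : ColimitType.{u}) (A : Type w) [Category.{u} A] :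
    Set (A ⥤ Type u) :=
  CClosureIn Ct {X | ∃ a : A, Nonempty (X ≅ coyoneda.obj (op a))}

/-- The one-step completion `𝖢₁B` of `B` under `𝖢`-colimits of representables. -/
def COneStep (Ct : ColimitType.{u}) (B : Type w) [Category.{u} B] :
    Set (Bᵒᵖ ⥤ Type u) :=
  {X | (∃ b : B, Nonempty (X ≅ yoneda.obj b)) ∨
    ∃ (C : Cat.{u, u}) (M : (↑C)ᵒᵖ ⥤ Type u) (H : ↑C ⥤ (Bᵒᵖ ⥤ Type u)),
      IsCDiagram Ct M H ∧ (∀ c : ↑C, ∃ b : B, Nonempty (H.obj c ≅ yoneda.obj b)) ∧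
      Nonempty (X ≅ wcolim M H)}

/-- The category `𝖢B`. -/
abbrev CCat (Ct : ColimitType.{u}) (B : Type w) [Category.{u} B] :=
  ObjectProperty.FullSubcategory (fun X => X ∈ CClosure Ct B)

/-- The inclusion `B ⥤ 𝖢B` (corestricted Yoneda). -/
def yonedaC (Ct : ColimitType.{u}) (B : Type w) [Category.{u} B] : B ⥤ CCat Ct B :=
  ObjectProperty.lift _ yoneda (fun b S hS => hS.1 ⟨b, ⟨Iso.refl _⟩⟩)

/-- Compatibility of a colimit type with a class of limits. -/
def Compatible (Psi : ShapeClass.{u}) (Ct : ColimitType.{u}) : Prop :=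
  ∀ (C : Type u) [iC : SmallCategory C] (M : Cᵒᵖ ⥤ Type u), (Ct C iC M).Nonempty →
    ∀ (D : Type u) [iD : SmallCategory D], Psi D iD →
      ∀ S : D ⥤ (C ⥤ Type u), (∀ d : D, S.obj d ∈ Ct C iC M) →
        limit S ∈ Ct C iC M ∧
        Nonempty (IsLimit ((wcolimF M).mapCone (limit.cone S)))

/-- Condition (a): each `𝖢_M` is closed under `α`-flat (= `α`-filtered) colimits. -/
def ConditionA (α : Cardinal.{u}) (Ct : ColimitType.{u}) : Prop :=
  ∀ (C : Type u) [iC : SmallCategory C] (M : Cᵒᵖ ⥤ Type u)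
    (D : Type u) [iD : SmallCategory D], IsAlphaFiltered α D →
    ∀ H : D ⥤ (C ⥤ Type u), (∀ d : D, H.obj d ∈ Ct C iC M) →
      colimit H ∈ Ct C iC M

/-- `A(H−, a)` for `H : Cᵒᵖ ⥤ A`, as a covariant functor `C ⥤ Set`. -/
def homDiagram {C : Type u} [SmallCategory C] {A : Type w} [Category.{u} A]
    (H : Cᵒᵖ ⥤ A) (a : A) : C ⥤ Type u :=
  H.rightOp ⋙ yoneda.obj a

/-- Condition (b): every `Ψ`-continuous `α`-flat-colimit-preserving functor from an
`α`-accessible category with `Ψ`-limits to `Set` is a `𝖢`-colimit of representables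
at `α`-presentable objects. -/
def ConditionB (α : Cardinal.{u}) (Psi : ShapeClass.{u}) (Ct : ColimitType.{u}) : Prop :=
  ∀ (A : Type (u + 1)) [iA : Category.{u} A], AlphaAccessible α A → PsiComplete Psi A →
    ∀ F : A ⥤ Type u, PsiContinuous Psi F → PreservesAlphaFlatColimits α F →
      ∃ (C : Type u) (iC : SmallCategory C) (M : Cᵒᵖ ⥤ Type u) (H : Cᵒᵖ ⥤ A),
        (∀ c : Cᵒᵖ, AlphaPresentable α (H.obj c)) ∧
        (∀ a : A, homDiagram H a ∈ Ct C iC M) ∧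
        Nonempty (F ≅ wcolim M (H.rightOp ⋙ coyoneda))

/-! ### 𝖢-virtual limits -/

/-- The presheaf `{M, Y∘H} = [C,Set](M, B(−, H−))`. -/
@[simps] def virtLim {C : Type u} [SmallCategory C] {B : Type w} [Category.{u} B]
    (M : C ⥤ Type u) (H : C ⥤ B) : Bᵒᵖ ⥤ Type u where
  obj b := M ⟶ H ⋙ coyoneda.obj (op b.unop)
  map {b b'} f := TypeCat.ofHom fun τ => τ ≫ Functor.whiskerLeft H (coyoneda.map f.unop.op)

/-- An `α`-small covariant weight. -/
def AlphaSmallWeight (α : Cardinal.{u}) {C : Type u} [SmallCategory C]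
    (M : C ⥤ Type u) : Prop :=
  Cardinal.mk (Arrow C) < α ∧ ∀ c : C, Cardinal.mk (M.obj c) < α

/-- `B` is `𝖢`-virtually `α`-complete. -/
def CVirtuallyAlphaComplete (Ct : ColimitType.{u}) (α : Cardinal.{u})
    (B : Type w) [Category.{u} B] : Prop :=
  ∀ (C : Type u) [iC : SmallCategory C] (M : C ⥤ Type u) (H : C ⥤ B),
    AlphaSmallWeight α M → virtLim M H ∈ CClosure Ct B

/-- `F : B ⥤ Set` is `𝖢`-virtually `α`-continuous. -/
def CVirtuallyAlphaContinuous (Ct : ColimitType.{u}) (α : Cardinal.{u})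
    {B : Type u} [SmallCategory B] (F : B ⥤ Type u) : Prop :=
  ∀ (C : Type u) [iC : SmallCategory C] (M : C ⥤ Type u) (H : C ⥤ B),
    AlphaSmallWeight α M → virtLim M H ∈ CClosure Ct B →
      Nonempty ((costarF F).obj (virtLim M H) ≃ (M ⟶ H ⋙ F))

/-! ### Diagrams of type 𝖢 in `𝖢B`, 𝖢-cocontinuity, 𝖢-presentability -/

/-- A diagram of type `𝖢` in the category `𝖢B`. -/
def IsCDiagramC (Ct : ColimitType.{u}) {C : Type u} [iC : SmallCategory C]
    (M : Cᵒᵖ ⥤ Type u) {B : Type w} [Category.{u} B] (H : C ⥤ CCat Ct B) : Prop :=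
  IsCDiagram Ct M (H ⋙ ObjectProperty.ι _)

/-- A set-valued functor on `𝖢B` is `𝖢`-cocontinuous: it preserves diagrams of type `𝖢`
as well as their colimits. -/
def CCocontinuousTo (Ct : ColimitType.{u}) {B : Type w} [Category.{u} B]
    (F : CCat Ct B ⥤ Type u) : Prop :=
  ∀ (C : Type u) [iC : SmallCategory C] (M : Cᵒᵖ ⥤ Type u) (H : C ⥤ CCat Ct B),
    IsCDiagramC Ct M H →
      (H ⋙ F) ∈ Ct C iC M ∧
      ∀ c : Cocone (elemDiagram M H), IsColimit c → Nonempty (IsColimit (F.mapCocone c))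

/-- A set-valued functor on `𝖢B` preserves colimits of type `𝖢`
(but not necessarily the diagrams themselves). -/
def CColimPreserving (Ct : ColimitType.{u}) {B : Type w} [Category.{u} B]
    (F : CCat Ct B ⥤ Type u) : Prop :=
  ∀ (C : Type u) [iC : SmallCategory C] (M : Cᵒᵖ ⥤ Type u) (H : C ⥤ CCat Ct B),
    IsCDiagramC Ct M H →
      ∀ c : Cocone (elemDiagram M H), IsColimit c → Nonempty (IsColimit (F.mapCocone c))

/-! ### Regularity, pseudo equivalence relations, exactness -/

/-- A regular projective object. -/
def RegProjective {E : Type w} [Category.{v} E] (P : E) : Prop :=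
  ∀ ⦃X Y : E⦄ (e : X ⟶ Y), Nonempty (RegularEpi e) → ∀ g : P ⟶ Y, ∃ f : P ⟶ X, f ≫ e = g

/-- A pseudo equivalence relation: a pair factoring as a regular epi followed by the
kernel pair of a regular epi. -/
def IsPseudoEqRel {E : Type w} [Category.{v} E] {R P : E} (f g : R ⟶ P) : Prop :=
  ∃ (S : E) (q : R ⟶ S) (h k : S ⟶ P), Nonempty (RegularEpi q) ∧ f = q ≫ h ∧ g = q ≫ k ∧
    ∃ (Z : E) (m : P ⟶ Z), Nonempty (RegularEpi m) ∧ IsKernelPair m h k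

/-- `𝖱`-presentable objects: the hom-functor preserves coequalizers of
pseudo equivalence relations. -/
def RPresentable {E : Type w} [Category.{v} E] (X : E) : Prop :=
  ∀ {R P : E} (f g : R ⟶ P), IsPseudoEqRel f g →
    PreservesColimit (parallelPair f g) (coyoneda.obj (op X))

/-- Enough regular projectives. -/
def EnoughRegProjectives (E : Type w) [Category.{v} E] : Prop :=
  ∀ X : E, ∃ (P : E) (p : P ⟶ X), RegProjective P ∧ Nonempty (RegularEpi p)

/-- An equivalence relation: a jointly monic, reflexive, symmetric, transitive pair. -/
def IsEquivRelPair {E : Type w} [Category.{v} E] [HasFiniteLimits E]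
    {R X : E} (f g : R ⟶ X) : Prop :=
  Mono (prod.lift f g) ∧
  (∃ r : X ⟶ R, r ≫ f = 𝟙 X ∧ r ≫ g = 𝟙 X) ∧
  (∃ s : R ⟶ R, s ≫ f = g ∧ s ≫ g = f) ∧
  (∃ t : pullback g f ⟶ R,
    t ≫ f = pullback.fst g f ≫ f ∧ t ≫ g = pullback.snd g f ≫ g)

/-- Barr-exactness (for a finitely complete category with coequalizers of kernel pairs):
regular epis are stable under pullback and every equivalence relation is a kernel pair. -/
def BarrExact (E : Type w) [Category.{v} E] [HasFiniteLimits E] : Prop :=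
  (∀ {X Y Z : E} (e : X ⟶ Y) (g : Z ⟶ Y), Nonempty (RegularEpi e) →
    Nonempty (RegularEpi (pullback.snd e g))) ∧
  (∀ {R X : E} (f g : R ⟶ X), IsEquivRelPair f g →
    ∃ (Z : E) (m : X ⟶ Z), IsKernelPair m f g)

/-- The closure of the representables under coequalizers of pseudo equivalence relations. -/
def RClosure (B : Type w) [Category.{u} B] : Set (Bᵒᵖ ⥤ Type u) :=
  ⋂₀ {S | (∀ b : B, yoneda.obj b ∈ S) ∧
    (∀ X Y : Bᵒᵖ ⥤ Type u, Nonempty (X ≅ Y) → X ∈ S → Y ∈ S) ∧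
    ∀ (R P : Bᵒᵖ ⥤ Type u) (f g : R ⟶ P), IsPseudoEqRel f g → R ∈ S → P ∈ S →
      colimit (parallelPair f g) ∈ S}

/-- The restricted Yoneda embedding into presheaves on the regular projectives. -/
def restrictedYoneda (E : Type u) [SmallCategory E] :
    E ⥤ ((ObjectProperty.FullSubcategory (RegProjective (E := E)))ᵒᵖ ⥤ Type u) :=
  yoneda ⋙ (Functor.whiskeringLeft _ _ _).obj (ObjectProperty.ι _).op

/-! ### Free groupoid actions -/

/-- The equalizer of `f` and `g` exists and is an initial object. -/
def HasInitialEqualizer {E : Type w} [Category.{v} E] {X Y : E} (f g : X ⟶ Y) : Prop :=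
  ∃ c : Fork f g, Nonempty (IsLimit c) ∧ Nonempty (IsInitial c.pt)

/-- A free groupoid action. -/
def FreeAction {G : Type w} [Groupoid.{v} G] {E : Type w'} [Category.{v'} E]
    (H : G ⥤ E) : Prop :=
  ∀ ⦃x y : G⦄ (g h : x ⟶ y), g ≠ h → HasInitialEqualizer (H.map g) (H.map h)

/-- A weakly-free groupoid action. -/
def WeaklyFreeAction {G : Type w} [Groupoid.{v} G] {E : Type w'} [Category.{v'} E]
    (H : G ⥤ E) : Prop :=
  ∀ ⦃x y : G⦄ (g h : x ⟶ y), H.map g ≠ H.map h → HasInitialEqualizer (H.map g) (H.map h)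

/-- A weakly-free action by `ℤ`: an automorphism all of whose non-identity powers
are fixed-point-free. -/
def WeaklyFreeAut {E : Type w} [Category.{v} E] {X : E} (f : Aut X) : Prop :=
  ∀ n : ℤ, (f ^ n).hom ≠ 𝟙 X → HasInitialEqualizer (f ^ n).hom (𝟙 X)

/-! ### Topos-theoretic notions -/

/-- Lex cocontinuous functors. -/
def LexCocontPred {A : Type w} [Category.{v} A] {K : Type w'} [Category.{v'} K]
    (F : A ⥤ K) : Prop :=
  PreservesFiniteLimits F ∧
  ∀ (D : Type u) [iD : SmallCategory D], PreservesColimitsOfShape D F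

/-- Finitary functors: those preserving (small) filtered colimits. -/
def FinitaryPred {A : Type w} [Category.{v} A] {K : Type w'} [Category.{v'} K]
    (F : A ⥤ K) : Prop :=
  ∀ (D : Type u) [iD : SmallCategory D] [IsFiltered D], PreservesColimitsOfShape D F

/-- Possessing all small filtered colimits. -/
def HasFilteredColimitsP (A : Type w) [Category.{v} A] : Prop :=
  ∀ (D : Type u) [iD : SmallCategory D] [IsFiltered D], HasColimitsOfShape D A

/-- A left exact localization of a presheaf category. -/
def IsLexLocalization (X : Type w) [Category.{v} X] : Prop :=
  ∃ (C : Cat.{u, u}) (J : X ⥤ ((↑C)ᵒᵖ ⥤ Type u)) (L : ((↑C)ᵒᵖ ⥤ Type u) ⥤ X),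
    Nonempty (L ⊣ J) ∧ J.Full ∧ J.Faithful ∧ PreservesFiniteLimits L

/-- A Grothendieck topos: an accessible left exact localization of a presheaf category. -/
def IsGrothendieckTopos (X : Type w) [Category.{v} X] : Prop :=
  ∃ (C : Cat.{u, u}) (J : X ⥤ ((↑C)ᵒᵖ ⥤ Type u)) (L : ((↑C)ᵒᵖ ⥤ Type u) ⥤ X),
    Nonempty (L ⊣ J) ∧ J.Full ∧ J.Faithful ∧ PreservesFiniteLimits L ∧
    ∃ κ : Cardinal.{u}, PreservesAlphaFlatColimits κ J


/-- every small category with all `α`-small limits is Cauchy complete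
(idempotents split); hence absolute colimits exist, i.e. every absolute weight lies in
the saturation of the class of `α`-small weights. -/
theorem statement10 (α : Cardinal.{u}) (hα : Cardinal.aleph0 ≤ α)
    (C : Type u) [SmallCategory C]
    (h : ∀ (D : Type u) [iD : SmallCategory D], AlphaSmall α D → HasLimitsOfShape D C) :
    IsIdempotentComplete C := by
  let D := ULiftHom.{u} (ULift.{u} WalkingParallelPair)
  have hfin : Finite (Arrow D) := by
    let f : Arrow D → Σ (X Y : WalkingParallelPair), (X ⟶ Y) :=
      fun a => ⟨a.left.objDown.down, a.right.objDown.down, a.hom.down⟩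
    let g : (Σ (X Y : WalkingParallelPair), (X ⟶ Y)) → Arrow D :=
      fun p => Arrow.mk
        (show (ULiftHom.objUp ⟨p.1⟩ : D) ⟶ ULiftHom.objUp ⟨p.2.1⟩ from ⟨p.2.2⟩)
    exact Finite.of_injective f
      (Function.LeftInverse.injective (g := g) (fun a => rfl))
  have hsmall : AlphaSmall α D := by
    refine lt_of_lt_of_le ?_ hα
    exact Cardinal.lt_aleph0_of_finite _
  have hD : HasLimitsOfShape D C := h D hsmall
  have : HasLimitsOfShape WalkingParallelPair C :=
    hasLimitsOfShape_of_equivalence (ULiftHomULiftCategory.equiv.{u, u} WalkingParallelPair).symm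
  have : HasEqualizers C := ⟨inferInstance⟩
  rw [Idempotents.isIdempotentComplete_iff_hasEqualizer_of_id_and_idempotent]
  intro X p hp
  infer_instance

end Paper
end

section
/- In the 2-category Cat, an invertible 2-cell φ : π₁ ⇒ π₂ : C → D is an equivalence 2-relation if and only if it is an acyclic isokernel cell, i.e., the isokernel cell of some functor q : D → E which is a retract equivalence, with the identifier of φ equal to the equalizer of π₁ and π₂. -/
set_option linter.unusedVariables false

open CategoryTheory CategoryTheory.Limits Opposite

universe w w' v v' u

namespace Paper

section Statement14

variable {C D : Type u} [Category.{u} C] [Category.{u} D]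

/-- The functor `φ̄ : C ⥤ D^𝟚` associated to an invertible 2-cell `φ : P₁ ⇒ P₂`. -/
@[simps] def phiBar (P₁ P₂ : C ⥤ D) (φ : P₁ ≅ P₂) : C ⥤ Arrow D where
  obj c := Arrow.mk (φ.hom.app c)
  map {c c'} f := Arrow.homMk (u := P₁.map f) (v := P₂.map f) (φ.hom.naturality f)

/-- `φ` is a 2-relation: `φ̄` is injective on objects and fully faithful. -/
def Is2Relation (P₁ P₂ : C ⥤ D) (φ : P₁ ≅ P₂) : Prop :=
  Function.Injective (phiBar P₁ P₂ φ).obj ∧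
  (phiBar P₁ P₂ φ).Full ∧ (phiBar P₁ P₂ φ).Faithful

/-- Reflexivity of the 2-relation `φ`. -/
def IsReflexive2 (P₁ P₂ : C ⥤ D) (φ : P₁ ≅ P₂) : Prop :=
  ∃ (r : D ⥤ C) (h₁ : r ⋙ P₁ = 𝟭 D) (h₂ : r ⋙ P₂ = 𝟭 D),
    ∀ d : D, φ.hom.app (r.obj d) =
      eqToHom ((congrArg (fun F : D ⥤ D => F.obj d) h₁).trans
        (congrArg (fun F : D ⥤ D => F.obj d) h₂).symm)

/-- Symmetry of the 2-relation `φ`. -/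
def IsSymmetric2 (P₁ P₂ : C ⥤ D) (φ : P₁ ≅ P₂) : Prop :=
  ∃ (s : C ⥤ C) (h₁ : s ⋙ P₁ = P₂) (h₂ : s ⋙ P₂ = P₁),
    ∀ c : C, φ.hom.app (s.obj c) =
      eqToHom (congrArg (fun F : C ⥤ D => F.obj c) h₁) ≫ φ.inv.app c ≫
        eqToHom (congrArg (fun F : C ⥤ D => F.obj c) h₂).symm

/-- The strict pullback `C ×_D C` of `P₂` along `P₁`. -/
def PB (P₁ P₂ : C ⥤ D) : Type u := {p : C × C // P₂.obj p.1 = P₁.obj p.2}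

instance (P₁ P₂ : C ⥤ D) : Category.{u} (PB P₁ P₂) where
  Hom p q := {f : (p.1.1 ⟶ q.1.1) × (p.1.2 ⟶ q.1.2) //
    P₂.map f.1 = eqToHom p.2 ≫ P₁.map f.2 ≫ eqToHom q.2.symm}
  id p := ⟨(𝟙 _, 𝟙 _), by simp⟩
  comp {p q r} f g := ⟨(f.1.1 ≫ g.1.1, f.1.2 ≫ g.1.2), by
    simp [f.2, g.2]⟩
  id_comp f := by apply Subtype.ext; simp
  comp_id f := by apply Subtype.ext; simp
  assoc f g h := by apply Subtype.ext; simp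

/-- First projection of the strict pullback. -/
@[simps] def rho₁ (P₁ P₂ : C ⥤ D) : PB P₁ P₂ ⥤ C where
  obj p := p.1.1
  map f := f.1.1
  map_id _ := rfl
  map_comp _ _ := rfl

/-- Second projection of the strict pullback. -/
@[simps] def rho₂ (P₁ P₂ : C ⥤ D) : PB P₁ P₂ ⥤ C where
  obj p := p.1.2
  map f := f.1.2
  map_id _ := rfl
  map_comp _ _ := rfl

/-- Transitivity of the 2-relation `φ`. -/
def IsTransitive2 (P₁ P₂ : C ⥤ D) (φ : P₁ ≅ P₂) : Prop :=
  ∃ (t : PB P₁ P₂ ⥤ C) (h₁ : t ⋙ P₁ = rho₁ P₁ P₂ ⋙ P₁)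
    (h₂ : t ⋙ P₂ = rho₂ P₁ P₂ ⋙ P₂),
    ∀ p : PB P₁ P₂, φ.hom.app (t.obj p) =
      eqToHom (congrArg (fun F : PB P₁ P₂ ⥤ D => F.obj p) h₁) ≫
        φ.hom.app p.1.1 ≫ eqToHom p.2 ≫ φ.hom.app p.1.2 ≫
        eqToHom (congrArg (fun F : PB P₁ P₂ ⥤ D => F.obj p) h₂).symm

/-- Acyclicity: the identifier of `φ` agrees with the equalizer of `π₁` and `π₂`. -/
def IsAcyclic2 (P₁ P₂ : C ⥤ D) (φ : P₁ ≅ P₂) : Prop :=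
  ∀ (c : C) (h : P₁.obj c = P₂.obj c), φ.hom.app c = eqToHom h

/-- An equivalence 2-relation. -/
def IsEquiv2Relation (P₁ P₂ : C ⥤ D) (φ : P₁ ≅ P₂) : Prop :=
  Is2Relation P₁ P₂ φ ∧ IsReflexive2 P₁ P₂ φ ∧ IsSymmetric2 P₁ P₂ φ ∧
    IsTransitive2 P₁ P₂ φ ∧ IsAcyclic2 P₁ P₂ φ

/-- A 2-cell is inverted to an identity by `q`. -/
def InvertedBy {E : Type u} [Category.{u} E] (q : D ⥤ E)
    {X : Type u} [Category.{u} X] {R₁ R₂ : X ⥤ D} (ψ : R₁ ≅ R₂) : Prop :=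
  ∃ h : R₁ ⋙ q = R₂ ⋙ q,
    ∀ x : X, q.map (ψ.hom.app x) = eqToHom (congrArg (fun F : X ⥤ E => F.obj x) h)

/-- `φ` is the isokernel cell of `q` : it is inverted to an identity by `q` and is
universal with that property. -/
def IsIsokernelCell {E : Type u} [Category.{u} E] (q : D ⥤ E)
    (P₁ P₂ : C ⥤ D) (φ : P₁ ≅ P₂) : Prop :=
  InvertedBy q φ ∧
  ∀ (X : Cat.{u, u}) (R₁ R₂ : ↑X ⥤ D) (ψ : R₁ ≅ R₂), InvertedBy q ψ →
    ∃! u : ↑X ⥤ C,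
      ∃ (h₁ : u ⋙ P₁ = R₁) (h₂ : u ⋙ P₂ = R₂),
        ∀ x : ↑X, φ.hom.app (u.obj x) =
          eqToHom (congrArg (fun F : ↑X ⥤ D => F.obj x) h₁) ≫ ψ.hom.app x ≫
            eqToHom (congrArg (fun F : ↑X ⥤ D => F.obj x) h₂).symm

/-- A retract equivalence. -/
def IsRetractEquiv {E : Type u} [Category.{u} E] (q : D ⥤ E) : Prop :=
  ∃ s : E ⥤ D, s ⋙ q = 𝟭 E ∧ Nonempty (q ⋙ s ≅ 𝟭 D)

/-! ### Auxiliary material for Statement 14 -/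

section Aux14

@[simp] theorem eqToHom_self {X : Type w} [Category.{v} X] {a : X} (h : a = a) :
    eqToHom h = 𝟙 a := rfl

theorem conj_eq {X : Type w} [Category.{v} X] {a b a' b' : X} {f : a ⟶ b} {g : a' ⟶ b'}
    (e₁ : a = a') (e₂ : b = b') (h : f ≫ eqToHom e₂ = eqToHom e₁ ≫ g)
    (E₁ : a' = a) (E₂ : b = b') : g = eqToHom E₁ ≫ f ≫ eqToHom E₂ := by
  subst e₁; subst e₂; simpa using h.symm

theorem conj_eq₂ {X : Type w} [Category.{v} X] {a b a' b' : X} {f : a ⟶ b} {g : a' ⟶ b'}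
    (e₁ : a = a') (e₂ : b = b') (h : f ≫ eqToHom e₂ = eqToHom e₁ ≫ g)
    (E₁ : a = a') (E₂ : b' = b) : f = eqToHom E₁ ≫ g ≫ eqToHom E₂ := by
  subst e₁; subst e₂; simpa using h

theorem unconj {X : Type w} [Category.{v} X] {a b a' b' : X} {f : a ⟶ b} {g : a' ⟶ b'}
    (E₁ : a' = a) (E₂ : b = b') (h : g = eqToHom E₁ ≫ f ≫ eqToHom E₂)
    (e₁ : a' = a) (e₂ : b' = b) : g ≫ eqToHom e₂ = eqToHom e₁ ≫ f := by
  subst E₁; subst E₂; simpa using h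

theorem sq_to_arrow_eq {X : Type w} [Category.{v} X] {a b a' b' : X}
    (f : a ⟶ b) (g : a' ⟶ b') (e₁ : a = a') (e₂ : b = b')
    (h : f ≫ eqToHom e₂ = eqToHom e₁ ≫ g) : Arrow.mk f = Arrow.mk g := by
  subst e₁; subst e₂; simp only [eqToHom_self, Category.comp_id, Category.id_comp] at h
  rw [h]

theorem arrow_eq_sq {X : Type w} [Category.{v} X] {A B : Arrow X} (h : A = B) :
    A.hom ≫ eqToHom (congrArg Comma.right h) = eqToHom (congrArg Comma.left h) ≫ B.hom := by
  cases h; simp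

/-- The walking object (one-object category) in universe `u`. -/
inductive WO : Type u
  | star

instance : Category.{u} WO.{u} where
  Hom _ _ := PUnit.{u + 1}
  id _ := ⟨⟩
  comp _ _ := ⟨⟩

/-- The constant functor out of the walking object. -/
@[simps, reducible] def woF {X : Type w} [Category.{v} X] (d : X) : WO.{u} ⥤ X where
  obj _ := d
  map _ := 𝟙 d

theorem wo_ext {X : Type w} [Category.{v} X] {F G : WO.{u} ⥤ X}
    (h : F.obj .star = G.obj .star) : F = G := by
  refine CategoryTheory.Functor.ext (fun x => by cases x; exact h) ?_
  intro x y f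
  cases x; cases y
  show F.map (𝟙 _) = _ ≫ G.map (𝟙 _) ≫ _
  simp

/-- Constant natural isomorphism over the walking object. -/
def woIso {X : Type w} [Category.{v} X] {a b : X} (i : a ≅ b) : woF a ≅ woF b :=
  NatIso.ofComponents (fun _ => i) (by intro x y f; simp)

/-- The walking arrow in universe `u`. -/
inductive WA : Type u
  | zero
  | one

/-- Morphisms of the walking arrow. -/
inductive WAHom : WA.{u} → WA.{u} → Type u
  | idz : WAHom .zero .zero
  | ido : WAHom .one .one
  | ar : WAHom .zero .one

instance : Category.{u} WA.{u} where
  Hom := WAHom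
  id x := match x with
    | .zero => .idz
    | .one => .ido
  comp {x y z} f g := match f, g with
    | .idz, g => g
    | .ido, .ido => .ido
    | .ar, .ido => .ar
  id_comp f := by cases f <;> rfl
  comp_id f := by cases f <;> rfl
  assoc f g h := by cases f <;> cases g <;> cases h <;> rfl

/-- The functor out of the walking arrow determined by a morphism. -/
@[simps, reducible] def waF {X : Type w} [Category.{v} X] {a b : X} (f : a ⟶ b) : WA.{u} ⥤ X where
  obj x := match x with
    | .zero => a
    | .one => b
  map {x y} g := match g with
    | .idz => 𝟙 a
    | .ido => 𝟙 b
    | .ar => f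
  map_id x := by cases x <;> rfl
  map_comp {x y z} g h := by change WAHom _ _ at g h; cases g <;> cases h <;> simp <;> rfl

theorem wa_ext {X : Type w} [Category.{v} X] {F G : WA.{u} ⥤ X}
    (h0 : F.obj .zero = G.obj .zero) (h1 : F.obj .one = G.obj .one)
    (har : F.map .ar = eqToHom h0 ≫ G.map .ar ≫ eqToHom h1.symm) : F = G := by
  refine CategoryTheory.Functor.ext (fun x => by cases x <;> assumption) ?_
  intro x y g
  change WAHom _ _ at g
  cases g
  · show F.map (𝟙 _) = _ ≫ G.map (𝟙 _) ≫ _; simp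
  · show F.map (𝟙 _) = _ ≫ G.map (𝟙 _) ≫ _; simp
  · exact har.trans (by congr 1)

/-- A natural isomorphism between functors out of the walking arrow. -/
def waIso {X : Type w} [Category.{v} X] {F G : WA.{u} ⥤ X}
    (i0 : F.obj .zero ≅ G.obj .zero) (i1 : F.obj .one ≅ G.obj .one)
    (w : F.map .ar ≫ i1.hom = i0.hom ≫ G.map .ar) : F ≅ G :=
  NatIso.ofComponents
    (fun x => match x with
      | .zero => i0
      | .one => i1)
    (by
      intro x y g
      change WAHom _ _ at g
      cases g
      · show F.map (𝟙 _) ≫ _ = _ ≫ G.map (𝟙 _); simp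
      · show F.map (𝟙 _) ≫ _ = _ ≫ G.map (𝟙 _); simp
      · exact w)

end Aux14

section Backward14

variable {E : Type u} [Category.{u} E]

/-- The composite 2-cell exhibiting transitivity data on the strict pullback. -/
@[simps!] def psiT (P₁ P₂ : C ⥤ D) (φ : P₁ ≅ P₂) :
    (rho₁ P₁ P₂ ⋙ P₁ : PB P₁ P₂ ⥤ D) ≅ rho₂ P₁ P₂ ⋙ P₂ :=
  NatIso.ofComponents (fun p => φ.app p.1.1 ≪≫ eqToIso p.2 ≪≫ φ.app p.1.2)
    (fun {p p'} f => by
      have n1 := φ.hom.naturality f.1.1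
      have n2 := φ.hom.naturality f.1.2
      change P₁.map f.1.1 ≫ (φ.hom.app p'.1.1 ≫ eqToHom p'.2 ≫ φ.hom.app p'.1.2) =
        (φ.hom.app p.1.1 ≫ eqToHom p.2 ≫ φ.hom.app p.1.2) ≫ P₂.map f.1.2
      rw [← Category.assoc, n1, Category.assoc, Category.assoc, f.2]
      simp only [Category.assoc, eqToHom_trans, eqToHom_trans_assoc, eqToHom_self,
        Category.id_comp]
      rw [n2])

theorem backward14 (P₁ P₂ : C ⥤ D) (φ : P₁ ≅ P₂) (q : D ⥤ E)
    (hik : IsIsokernelCell q P₁ P₂ φ) (hac : IsAcyclic2 P₁ P₂ φ) :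
    IsEquiv2Relation P₁ P₂ φ := by
  obtain ⟨⟨hq, hqm⟩, hup⟩ := hik
  -- injectivity on objects
  have hinj : Function.Injective (phiBar P₁ P₂ φ).obj := by
    intro c c' h
    have e₁ : P₁.obj c = P₁.obj c' := congrArg Comma.left h
    have e₂ : P₂.obj c = P₂.obj c' := congrArg Comma.right h
    have sq : φ.hom.app c ≫ eqToHom e₂ = eqToHom e₁ ≫ φ.hom.app c' := arrow_eq_sq h
    have hinv : InvertedBy q (woIso (φ.app c)) := by
      refine ⟨wo_ext (congrArg (fun F : C ⥤ E => F.obj c) hq), fun x => ?_⟩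
      show q.map (φ.hom.app c) = _
      exact hqm c
    obtain ⟨u, hu, huniq⟩ := hup (Cat.of WO.{u}) (woF (P₁.obj c)) (woF (P₂.obj c))
      (woIso (φ.app c)) hinv
    have h1 : woF c = u := by
      refine huniq (woF c) ⟨wo_ext rfl, wo_ext rfl, fun x => ?_⟩
      show φ.hom.app c = eqToHom _ ≫ φ.hom.app c ≫ eqToHom _
      simp
    have h2 : woF c' = u := by
      refine huniq (woF c') ⟨wo_ext e₁.symm, wo_ext e₂.symm, fun x => ?_⟩
      show φ.hom.app c' = eqToHom _ ≫ φ.hom.app c ≫ eqToHom _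
      exact conj_eq e₁ e₂ sq _ _
    exact congrArg (fun F : WO.{u} ⥤ C => F.obj .star) (h1.trans h2.symm)
  -- fullness
  have hfull : (phiBar P₁ P₂ φ).Full := by
    refine ⟨fun {c c'} τ => ?_⟩
    have w : τ.left ≫ φ.hom.app c' = φ.hom.app c ≫ τ.right := τ.w
    have hqw : q.map τ.left ≫ q.map (φ.hom.app c') = q.map (φ.hom.app c) ≫ q.map τ.right := by
      erw [← q.map_comp, ← q.map_comp, w]
      rfl
    erw [hqm c, hqm c'] at hqw
    have hinv : InvertedBy q (waIso (F := waF τ.left) (G := waF τ.right)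
        (φ.app c) (φ.app c') w) := by
      refine ⟨wa_ext (congrArg (fun F : C ⥤ E => F.obj c) hq)
        (congrArg (fun F : C ⥤ E => F.obj c') hq) ?_, fun x => ?_⟩
      · exact conj_eq₂ _ _ hqw _ _
      · cases x
        · exact hqm c
        · exact hqm c'
    obtain ⟨u, ⟨h₁, h₂, hcond⟩, -⟩ := hup (Cat.of WA.{u}) (waF τ.left) (waF τ.right)
      (waIso (φ.app c) (φ.app c') w) hinv
    have e₁0 : P₁.obj (u.obj .zero) = P₁.obj c :=
      congrArg (fun F : WA.{u} ⥤ D => F.obj .zero) h₁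
    have e₂0 : P₂.obj (u.obj .zero) = P₂.obj c :=
      congrArg (fun F : WA.{u} ⥤ D => F.obj .zero) h₂
    have e₁1 : P₁.obj (u.obj .one) = P₁.obj c' :=
      congrArg (fun F : WA.{u} ⥤ D => F.obj .one) h₁
    have e₂1 : P₂.obj (u.obj .one) = P₂.obj c' :=
      congrArg (fun F : WA.{u} ⥤ D => F.obj .one) h₂
    have hobj0 : u.obj .zero = c := by
      refine hinj (sq_to_arrow_eq _ _ e₁0 e₂0 (unconj _ _ (hcond WA.zero) _ _))
    have hobj1 : u.obj .one = c' := by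
      refine hinj (sq_to_arrow_eq _ _ e₁1 e₂1 (unconj _ _ (hcond WA.one) _ _))
    refine ⟨eqToHom hobj0.symm ≫ u.map .ar ≫ eqToHom hobj1, ?_⟩
    have harr1 := Functor.congr_hom h₁ WAHom.ar
    have harr2 := Functor.congr_hom h₂ WAHom.ar
    apply CommaMorphism.ext
    · show P₁.map (eqToHom hobj0.symm ≫ u.map .ar ≫ eqToHom hobj1) = τ.left
      simp only [Functor.map_comp, eqToHom_map]
      rw [show P₁.map (u.map WAHom.ar) = _ from harr1]
      simp [eqToHom_trans]
      erw [eqToHom_self, eqToHom_self, Category.id_comp, Category.comp_id]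
    · show P₂.map (eqToHom hobj0.symm ≫ u.map .ar ≫ eqToHom hobj1) = τ.right
      simp only [Functor.map_comp, eqToHom_map]
      rw [show P₂.map (u.map WAHom.ar) = _ from harr2]
      simp [eqToHom_trans]
      erw [eqToHom_self, eqToHom_self, Category.id_comp, Category.comp_id]
  -- faithfulness
  have hfaith : (phiBar P₁ P₂ φ).Faithful := by
    refine ⟨fun {c c'} g g' hgg => ?_⟩
    have hp1 : P₁.map g = P₁.map g' := congrArg CommaMorphism.left hgg
    have hp2 : P₂.map g = P₂.map g' := congrArg CommaMorphism.right hgg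
    have hinv : InvertedBy q (waIso (F := waF (P₁.map g)) (G := waF (P₂.map g))
        (φ.app c) (φ.app c') (φ.hom.naturality g)) := by
      refine ⟨wa_ext (congrArg (fun F : C ⥤ E => F.obj c) hq)
        (congrArg (fun F : C ⥤ E => F.obj c') hq) (Functor.congr_hom hq g), fun x => ?_⟩
      cases x
      · exact hqm c
      · exact hqm c'
    obtain ⟨u, -, huniq⟩ := hup (Cat.of WA.{u}) (waF (P₁.map g)) (waF (P₂.map g))
      (waIso (φ.app c) (φ.app c') (φ.hom.naturality g)) hinv
    have cond : ∀ (k : c ⟶ c'), P₁.map k = P₁.map g → P₂.map k = P₂.map g →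
        waF k = u := by
      intro k hk1 hk2
      refine huniq (waF k) ⟨wa_ext rfl rfl ?_, wa_ext rfl rfl ?_, fun x => ?_⟩
      · show P₁.map k = eqToHom _ ≫ P₁.map g ≫ eqToHom _
        simp [hk1]
      · show P₂.map k = eqToHom _ ≫ P₂.map g ≫ eqToHom _
        simp [hk2]
      · cases x
        · show φ.hom.app c = eqToHom _ ≫ φ.hom.app c ≫ eqToHom _
          simp
        · show φ.hom.app c' = eqToHom _ ≫ φ.hom.app c' ≫ eqToHom _
          simp
    have hu : waF g = waF g' := (cond g rfl rfl).trans (cond g' hp1.symm hp2.symm).symm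
    have := Functor.congr_hom hu WAHom.ar
    simpa using this
  -- reflexivity
  have hrefl : IsReflexive2 P₁ P₂ φ := by
    obtain ⟨r, ⟨h₁, h₂, hcond⟩, -⟩ := hup (Cat.of D) (𝟭 D) (𝟭 D) (Iso.refl (𝟭 D))
      ⟨rfl, fun d => q.map_id d⟩
    refine ⟨r, h₁, h₂, fun d => ?_⟩
    rw [hcond d]
    simp [eqToHom_trans]
  -- symmetry
  have hsymm : IsSymmetric2 P₁ P₂ φ := by
    have hinv : InvertedBy q φ.symm := by
      refine ⟨hq.symm, fun c => ?_⟩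
      have h1 : q.map (φ.inv.app c) ≫ q.map (φ.hom.app c) = 𝟙 _ := by
        rw [← q.map_comp]; simp
      rw [hqm c] at h1
      rw [comp_eqToHom_iff] at h1
      show q.map (φ.inv.app c) = _
      rw [h1]
      simp
    obtain ⟨s, ⟨h₁, h₂, hcond⟩, -⟩ := hup (Cat.of C) P₂ P₁ φ.symm hinv
    exact ⟨s, h₁, h₂, fun c => hcond c⟩
  -- transitivity
  have htrans : IsTransitive2 P₁ P₂ φ := by
    have hq1 : ∀ {a b : C} (g : a ⟶ b), q.map (P₁.map g) =
        eqToHom (congrArg (fun F : C ⥤ E => F.obj a) hq) ≫ q.map (P₂.map g) ≫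
          eqToHom (congrArg (fun F : C ⥤ E => F.obj b) hq).symm :=
      fun g => Functor.congr_hom hq g
    have hinv : InvertedBy q (psiT P₁ P₂ φ) := by
      have hobj : ∀ p : PB P₁ P₂, q.obj (P₁.obj p.1.1) = q.obj (P₂.obj p.1.2) :=
        fun p => (congrArg (fun F : C ⥤ E => F.obj p.1.1) hq).trans
          ((congrArg q.obj p.2).trans (congrArg (fun F : C ⥤ E => F.obj p.1.2) hq))
      refine ⟨CategoryTheory.Functor.ext hobj ?_, fun p => ?_⟩
      · intro p p' f
        show q.map (P₁.map f.1.1) = _ ≫ q.map (P₂.map f.1.2) ≫ _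
        rw [hq1 f.1.1, f.2]
        simp only [Functor.map_comp, eqToHom_map]
        rw [hq1 f.1.2]
        simp [eqToHom_trans]
        rfl
      · rw [show (psiT P₁ P₂ φ).hom.app p = φ.hom.app p.1.1 ≫ eqToHom p.2 ≫ φ.hom.app p.1.2
          from rfl]
        erw [Functor.map_comp, Functor.map_comp, eqToHom_map, hqm, hqm]
        erw [eqToHom_trans, eqToHom_trans]
    obtain ⟨t, ⟨h₁, h₂, hcond⟩, -⟩ := hup (Cat.of (PB P₁ P₂)) (rho₁ P₁ P₂ ⋙ P₁)
      (rho₂ P₁ P₂ ⋙ P₂) (psiT P₁ P₂ φ) hinv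
    refine ⟨t, h₁, h₂, fun p => ?_⟩
    rw [hcond p]
    exact congrArg (eqToHom _ ≫ ·)
      ((Category.assoc (φ.hom.app p.1.1) (eqToHom p.2 ≫ φ.hom.app p.1.2) _).trans
        (congrArg (φ.hom.app p.1.1 ≫ ·) (Category.assoc _ _ _)))
  exact ⟨⟨hinj, hfull, hfaith⟩, hrefl, hsymm, htrans, hac⟩

end Backward14

section Forward14

theorem rearrange₅ {X : Type w} [Category.{v} X] {a₀ a₁ a₂ a₃ a₄ a₅ : X}
    {f : a₁ ⟶ a₂} {g : a₃ ⟶ a₄} {e₀ : a₀ = a₁} {e₂ : a₂ = a₃} {e₄ : a₄ = a₅} {e : a₀ = a₅}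
    (h : eqToHom e = eqToHom e₀ ≫ f ≫ eqToHom e₂ ≫ g ≫ eqToHom e₄)
    (E : a₂ = a₃) (E' : a₁ = a₄) : f ≫ eqToHom E ≫ g = eqToHom E' := by
  subst e₀; subst e₂; subst e₄; subst e
  simpa using h.symm

variable (P₁ P₂ : C ⥤ D) (φ : P₁ ≅ P₂)

/-- The relation on objects of `D` induced by the 2-relation `φ`. -/
def ERel (d d' : D) : Prop := ∃ c : C, P₁.obj c = d ∧ P₂.obj c = d'

variable {P₁ P₂}

/-- Uniqueness of the isomorphism classified by an equivalence 2-relation. -/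
theorem phi_unique (hE : IsEquiv2Relation P₁ P₂ φ) {c c' : C}
    (e₁ : P₁.obj c = P₁.obj c') (e₂ : P₂.obj c = P₂.obj c') :
    φ.hom.app c ≫ eqToHom e₂ = eqToHom e₁ ≫ φ.hom.app c' := by
  obtain ⟨-, -, ⟨s, hs₁, hs₂, hs⟩, ⟨t, ht₁, ht₂, ht⟩, hac⟩ := hE
  have a : P₁.obj (s.obj c') = P₂.obj c' := congrArg (fun F : C ⥤ D => F.obj c') hs₁
  have b : P₂.obj (s.obj c') = P₁.obj c' := congrArg (fun F : C ⥤ D => F.obj c') hs₂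
  have hp : P₂.obj c = P₁.obj (s.obj c') := e₂.trans a.symm
  set p : PB P₁ P₂ := ⟨(c, s.obj c'), hp⟩ with hpdef
  have hA : P₁.obj (t.obj p) = P₁.obj c := congrArg (fun F : PB P₁ P₂ ⥤ D => F.obj p) ht₁
  have hB : P₂.obj (t.obj p) = P₂.obj (s.obj c') :=
    congrArg (fun F : PB P₁ P₂ ⥤ D => F.obj p) ht₂
  have hself : P₁.obj (t.obj p) = P₂.obj (t.obj p) :=
    hA.trans (e₁.trans (b.symm.trans hB.symm))
  have h1 : φ.hom.app (t.obj p) = eqToHom hA ≫ φ.hom.app c ≫ eqToHom hp ≫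
      φ.hom.app (s.obj c') ≫ eqToHom hB.symm := ht p
  rw [hac (t.obj p) hself, hs c'] at h1
  simp only [Category.assoc, eqToHom_trans, eqToHom_trans_assoc] at h1
  have h2 := rearrange₅ h1 e₂ e₁
  have h3 := congrArg (· ≫ φ.hom.app c') h2
  simpa [Category.assoc] using h3

/-- The canonical isomorphism between related objects. -/
noncomputable def theta {d d' : D} (h : ERel P₁ P₂ d d') : d ⟶ d' :=
  eqToHom h.choose_spec.1.symm ≫ φ.hom.app h.choose ≫ eqToHom h.choose_spec.2

theorem theta_spec (hE : IsEquiv2Relation P₁ P₂ φ) {d d' : D} (h : ERel P₁ P₂ d d')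
    {c : C} (e₁ : P₁.obj c = d) (e₂ : P₂.obj c = d') :
    theta φ h = eqToHom e₁.symm ≫ φ.hom.app c ≫ eqToHom e₂ := by
  have sq := phi_unique φ hE (h.choose_spec.1.trans e₁.symm) (h.choose_spec.2.trans e₂.symm)
  have h2 := conj_eq₂ _ _ sq (h.choose_spec.1.trans e₁.symm) (e₂.trans h.choose_spec.2.symm)
  show eqToHom _ ≫ φ.hom.app h.choose ≫ eqToHom _ = _
  rw [h2]
  simp only [Category.assoc, eqToHom_trans, eqToHom_trans_assoc]

theorem theta_eqToHom (hE : IsEquiv2Relation P₁ P₂ φ) {d d' : D} (h : ERel P₁ P₂ d d')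
    (e : d = d') : theta φ h = eqToHom e := by
  rw [theta_spec φ hE h h.choose_spec.1 h.choose_spec.2]
  rw [hE.2.2.2.2 h.choose (h.choose_spec.1.trans (e.trans h.choose_spec.2.symm))]
  simp only [eqToHom_trans]

theorem theta_phi (hE : IsEquiv2Relation P₁ P₂ φ) (c : C)
    (h : ERel P₁ P₂ (P₁.obj c) (P₂.obj c)) : theta φ h = φ.hom.app c := by
  rw [theta_spec φ hE h rfl rfl]; simp

theorem erel_refl (hE : IsEquiv2Relation P₁ P₂ φ) (d : D) : ERel P₁ P₂ d d := by
  obtain ⟨-, ⟨r, h₁, h₂, -⟩, -⟩ := hE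
  exact ⟨r.obj d, congrArg (fun F : D ⥤ D => F.obj d) h₁,
    congrArg (fun F : D ⥤ D => F.obj d) h₂⟩

theorem erel_symm (hE : IsEquiv2Relation P₁ P₂ φ) {d d' : D} (h : ERel P₁ P₂ d d') :
    ERel P₁ P₂ d' d := by
  obtain ⟨c, e₁, e₂⟩ := h
  obtain ⟨-, -, ⟨s, h₁, h₂, -⟩, -⟩ := hE
  exact ⟨s.obj c, (congrArg (fun F : C ⥤ D => F.obj c) h₁).trans e₂,
    (congrArg (fun F : C ⥤ D => F.obj c) h₂).trans e₁⟩

theorem erel_trans (hE : IsEquiv2Relation P₁ P₂ φ) {d d' d'' : D} (h : ERel P₁ P₂ d d')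
    (h' : ERel P₁ P₂ d' d'') : ERel P₁ P₂ d d'' := by
  obtain ⟨c, e₁, e₂⟩ := h
  obtain ⟨c', e₁', e₂'⟩ := h'
  obtain ⟨-, -, -, ⟨t, ht₁, ht₂, -⟩, -⟩ := hE
  refine ⟨t.obj ⟨(c, c'), e₂.trans e₁'.symm⟩, ?_, ?_⟩
  · exact (congrArg (fun F : PB P₁ P₂ ⥤ D => F.obj ⟨(c, c'), e₂.trans e₁'.symm⟩) ht₁).trans e₁
  · exact (congrArg (fun F : PB P₁ P₂ ⥤ D => F.obj ⟨(c, c'), e₂.trans e₁'.symm⟩) ht₂).trans e₂'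

theorem theta_trans (hE : IsEquiv2Relation P₁ P₂ φ) {d d' d'' : D} (h₁ : ERel P₁ P₂ d d')
    (h₂ : ERel P₁ P₂ d' d'') (h₃ : ERel P₁ P₂ d d'') :
    theta φ h₁ ≫ theta φ h₂ = theta φ h₃ := by
  obtain ⟨t, ht₁, ht₂, ht⟩ := hE.2.2.2.1
  have hp : P₂.obj h₁.choose = P₁.obj h₂.choose :=
    h₁.choose_spec.2.trans h₂.choose_spec.1.symm
  set p : PB P₁ P₂ := ⟨(h₁.choose, h₂.choose), hp⟩ with hpdef
  have hA : P₁.obj (t.obj p) = P₁.obj h₁.choose :=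
    congrArg (fun F : PB P₁ P₂ ⥤ D => F.obj p) ht₁
  have hB : P₂.obj (t.obj p) = P₂.obj h₂.choose :=
    congrArg (fun F : PB P₁ P₂ ⥤ D => F.obj p) ht₂
  have hcond : φ.hom.app (t.obj p) = eqToHom hA ≫ φ.hom.app h₁.choose ≫ eqToHom hp ≫
      φ.hom.app h₂.choose ≫ eqToHom hB.symm := ht p
  rw [theta_spec φ hE h₃ (hA.trans h₁.choose_spec.1) (hB.trans h₂.choose_spec.2), hcond]
  show (eqToHom _ ≫ φ.hom.app h₁.choose ≫ eqToHom _) ≫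
      (eqToHom _ ≫ φ.hom.app h₂.choose ≫ eqToHom _) = _
  simp only [Category.assoc, eqToHom_trans, eqToHom_trans_assoc]

theorem theta_inv (hE : IsEquiv2Relation P₁ P₂ φ) {d d' : D} (h : ERel P₁ P₂ d d')
    (h' : ERel P₁ P₂ d' d) : theta φ h ≫ theta φ h' = 𝟙 d := by
  rw [theta_trans φ hE h h' (erel_refl φ hE d), theta_eqToHom φ hE _ rfl]
  rfl

theorem theta_phi_inv (hE : IsEquiv2Relation P₁ P₂ φ) (c : C)
    (h : ERel P₁ P₂ (P₂.obj c) (P₁.obj c)) : theta φ h = φ.inv.app c := by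
  have h1 := theta_inv φ hE h ⟨c, rfl, rfl⟩
  rw [theta_phi φ hE c ⟨c, rfl, rfl⟩] at h1
  have := congrArg (· ≫ φ.inv.app c) h1
  simpa [Category.assoc] using this

/-- The setoid on objects of `D` induced by an equivalence 2-relation. -/
def eSetoid (hE : IsEquiv2Relation P₁ P₂ φ) : Setoid D :=
  ⟨ERel P₁ P₂, ⟨erel_refl φ hE, erel_symm φ hE, erel_trans φ hE⟩⟩

theorem induced_eqToHom {J : Type u'} {X : Type w} [Category.{v} X] (F : J → X)
    {x y : InducedCategory X F} (h : x = y) :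
    eqToHom h = InducedCategory.homMk (eqToHom (congrArg F h)) := by
  subst h; rfl

theorem induced_comp {J : Type u'} {X : Type w} [Category.{v} X] (F : J → X)
    {x y z : InducedCategory X F} (f : x ⟶ y) (g : y ⟶ z) :
    f ≫ g = InducedCategory.homMk (f.hom ≫ g.hom) := rfl

/-- The quotient category of `D` by the equivalence 2-relation. -/
abbrev ECat (hE : IsEquiv2Relation P₁ P₂ φ) : Type u :=
  InducedCategory D (fun x : Quotient (eSetoid φ hE) => x.out)

theorem rel_out_mk (hE : IsEquiv2Relation P₁ P₂ φ) (d : D) :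
    ERel P₁ P₂ ((Quotient.mk (eSetoid φ hE) d).out) d := by
  have h := Quotient.exact (s := eSetoid φ hE)
    (Quotient.out_eq (Quotient.mk (eSetoid φ hE) d))
  exact h

theorem rel_mk_out (hE : IsEquiv2Relation P₁ P₂ φ) (d : D) :
    ERel P₁ P₂ d ((Quotient.mk (eSetoid φ hE) d).out) :=
  erel_symm φ hE (rel_out_mk φ hE d)

/-- The quotient functor `q : D ⥤ E`. -/
noncomputable def qF (hE : IsEquiv2Relation P₁ P₂ φ) : D ⥤ ECat φ hE where
  obj d := Quotient.mk (eSetoid φ hE) d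
  map {d d'} f := InducedCategory.homMk
    (theta φ (rel_out_mk φ hE d) ≫ f ≫ theta φ (rel_mk_out φ hE d'))
  map_id d := by
    apply InducedCategory.hom_ext
    show theta φ _ ≫ 𝟙 d ≫ theta φ _ = _
    rw [Category.id_comp]
    exact theta_inv φ hE _ _
  map_comp {d d' d''} f g := by
    apply InducedCategory.hom_ext
    show theta φ _ ≫ (f ≫ g) ≫ theta φ _ =
      (theta φ _ ≫ f ≫ theta φ _) ≫ (theta φ _ ≫ g ≫ theta φ _)
    slice_rhs 3 4 => rw [theta_inv φ hE (rel_mk_out φ hE d') (rel_out_mk φ hE d')]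
    simp

theorem qF_map (hE : IsEquiv2Relation P₁ P₂ φ) {d d' : D} (f : d ⟶ d') :
    (qF φ hE).map f = InducedCategory.homMk
      (theta φ (rel_out_mk φ hE d) ≫ f ≫ theta φ (rel_mk_out φ hE d')) := rfl

/-- The section `s : E ⥤ D`. -/
noncomputable def sF (hE : IsEquiv2Relation P₁ P₂ φ) : ECat φ hE ⥤ D :=
  inducedFunctor _

theorem sq_id (hE : IsEquiv2Relation P₁ P₂ φ) : sF φ hE ⋙ qF φ hE = 𝟭 (ECat φ hE) := by
  have hobj : ∀ x : ECat φ hE, (sF φ hE ⋙ qF φ hE).obj x = (𝟭 (ECat φ hE)).obj x := by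
    intro x
    exact Quotient.out_eq x
  refine CategoryTheory.Functor.ext hobj ?_
  intro x y f
  show (qF φ hE).map ((sF φ hE).map f) = _
  rw [qF_map]
  rw [induced_eqToHom, induced_eqToHom]
  rw [theta_eqToHom φ hE (rel_out_mk φ hE ((sF φ hE).obj x))
      (congrArg Quotient.out (Quotient.out_eq x)),
    theta_eqToHom φ hE (rel_mk_out φ hE ((sF φ hE).obj y))
      (congrArg Quotient.out (Quotient.out_eq y)).symm]
  rfl

/-- The natural isomorphism `q ⋙ s ≅ 𝟭 D`. -/
noncomputable def qsIso (hE : IsEquiv2Relation P₁ P₂ φ) : qF φ hE ⋙ sF φ hE ≅ 𝟭 D :=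
  NatIso.ofComponents
    (fun d => ((⟨theta φ (rel_out_mk φ hE d), theta φ (rel_mk_out φ hE d),
        theta_inv φ hE _ _, theta_inv φ hE _ _⟩ :
      ((Quotient.mk (eSetoid φ hE) d).out : D) ≅ d) :
        (qF φ hE ⋙ sF φ hE).obj d ≅ (𝟭 D).obj d))
    (fun {d d'} f => by
      show (qF φ hE ⋙ sF φ hE).map f ≫ theta φ (rel_out_mk φ hE d') =
        theta φ (rel_out_mk φ hE d) ≫ f
      have : (qF φ hE ⋙ sF φ hE).map f =
        theta φ (rel_out_mk φ hE d) ≫ f ≫ theta φ (rel_mk_out φ hE d') := rfl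
      refine (congrArg (· ≫ theta φ (rel_out_mk φ hE d')) this).trans ?_
      show (theta φ (rel_out_mk φ hE d) ≫ f ≫ theta φ (rel_mk_out φ hE d')) ≫
        theta φ (rel_out_mk φ hE d') = theta φ (rel_out_mk φ hE d) ≫ f
      rw [Category.assoc, Category.assoc,
        theta_inv φ hE (rel_mk_out φ hE d') (rel_out_mk φ hE d')]
      simp)

theorem retract14 (hE : IsEquiv2Relation P₁ P₂ φ) : IsRetractEquiv (qF φ hE) :=
  ⟨sF φ hE, sq_id φ hE, ⟨qsIso φ hE⟩⟩

theorem q_obj_eq (hE : IsEquiv2Relation P₁ P₂ φ) (c : C) :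
    Quotient.mk (eSetoid φ hE) (P₁.obj c) = Quotient.mk (eSetoid φ hE) (P₂.obj c) :=
  Quotient.sound ⟨c, rfl, rfl⟩

theorem q_comm (hE : IsEquiv2Relation P₁ P₂ φ) : P₁ ⋙ qF φ hE = P₂ ⋙ qF φ hE := by
  have hins : ∀ {c c' : C} (f : c ⟶ c'),
      P₁.map f = φ.hom.app c ≫ P₂.map f ≫ φ.inv.app c' := by
    intro c c' f
    rw [← Category.assoc, ← φ.hom.naturality]
    simp
  have hobj : ∀ c : C, (P₁ ⋙ qF φ hE).obj c = (P₂ ⋙ qF φ hE).obj c := by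
    intro c
    exact q_obj_eq φ hE c
  refine CategoryTheory.Functor.ext hobj ?_
  intro c c' f
  show (qF φ hE).map (P₁.map f) = eqToHom _ ≫ (qF φ hE).map (P₂.map f) ≫ eqToHom _
  rw [qF_map, qF_map]
  rw [induced_eqToHom, induced_eqToHom]
  apply InducedCategory.hom_ext
  change theta φ (rel_out_mk φ hE (P₁.obj c)) ≫ P₁.map f ≫ theta φ (rel_mk_out φ hE (P₁.obj c')) =
    eqToHom (congrArg Quotient.out (q_obj_eq φ hE c)) ≫
      (theta φ (rel_out_mk φ hE (P₂.obj c)) ≫ P₂.map f ≫ theta φ (rel_mk_out φ hE (P₂.obj c'))) ≫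
        eqToHom (congrArg Quotient.out (q_obj_eq φ hE c')).symm
  have hc : ERel P₁ P₂ (P₁.obj c) (P₂.obj c) := ⟨c, rfl, rfl⟩
  have hinvc' : ERel P₁ P₂ (P₂.obj c') (P₁.obj c') := erel_symm φ hE ⟨c', rfl, rfl⟩
  have hL : ERel P₁ P₂ ((Quotient.mk (eSetoid φ hE) (P₁.obj c)).out)
      ((Quotient.mk (eSetoid φ hE) (P₂.obj c)).out) :=
    erel_trans φ hE (rel_out_mk φ hE (P₁.obj c))
      (erel_trans φ hE hc (rel_mk_out φ hE (P₂.obj c)))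
  have hR : ERel P₁ P₂ ((Quotient.mk (eSetoid φ hE) (P₂.obj c')).out)
      ((Quotient.mk (eSetoid φ hE) (P₁.obj c')).out) :=
    erel_trans φ hE (rel_out_mk φ hE (P₂.obj c'))
      (erel_trans φ hE hinvc' (rel_mk_out φ hE (P₁.obj c')))
  rw [hins f]
  rw [← theta_phi φ hE c hc, ← theta_phi_inv φ hE c' hinvc']
  rw [← theta_eqToHom φ hE hL (congrArg Quotient.out (q_obj_eq φ hE c)),
    ← theta_eqToHom φ hE hR (congrArg Quotient.out (q_obj_eq φ hE c')).symm]
  simp only [Category.assoc]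
  rw [theta_trans φ hE hinvc' (rel_mk_out φ hE (P₁.obj c'))
    (erel_trans φ hE hinvc' (rel_mk_out φ hE (P₁.obj c')))]
  rw [theta_trans φ hE (rel_mk_out φ hE (P₂.obj c')) hR
    (erel_trans φ hE hinvc' (rel_mk_out φ hE (P₁.obj c')))]
  simp only [← Category.assoc]
  rw [theta_trans φ hE (rel_out_mk φ hE (P₁.obj c)) hc
    (erel_trans φ hE (rel_out_mk φ hE (P₁.obj c)) hc)]
  rw [theta_trans φ hE hL (rel_out_mk φ hE (P₂.obj c))
    (erel_trans φ hE (rel_out_mk φ hE (P₁.obj c)) hc)]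

theorem q_inverts (hE : IsEquiv2Relation P₁ P₂ φ) : InvertedBy (qF φ hE) φ := by
  refine ⟨q_comm φ hE, fun c => ?_⟩
  have hc : ERel P₁ P₂ (P₁.obj c) (P₂.obj c) := ⟨c, rfl, rfl⟩
  have hL : ERel P₁ P₂ ((Quotient.mk (eSetoid φ hE) (P₁.obj c)).out)
      ((Quotient.mk (eSetoid φ hE) (P₂.obj c)).out) :=
    erel_trans φ hE (rel_out_mk φ hE (P₁.obj c))
      (erel_trans φ hE hc (rel_mk_out φ hE (P₂.obj c)))
  show (qF φ hE).map (φ.hom.app c) = _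
  rw [qF_map]
  rw [← theta_phi φ hE c hc]
  rw [theta_trans φ hE hc (rel_mk_out φ hE (P₂.obj c))
    (erel_trans φ hE hc (rel_mk_out φ hE (P₂.obj c)))]
  rw [theta_trans φ hE (rel_out_mk φ hE (P₁.obj c))
    (erel_trans φ hE hc (rel_mk_out φ hE (P₂.obj c))) hL]
  rw [theta_eqToHom φ hE hL (congrArg Quotient.out (q_obj_eq φ hE c))]
  exact (induced_eqToHom _ _).symm

theorem q_isokernel (hE : IsEquiv2Relation P₁ P₂ φ) :
    IsIsokernelCell (qF φ hE) P₁ P₂ φ := by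
  have hFull := hE.1.2.1
  have hFaith := hE.1.2.2
  have hInj := hE.1.1
  have ext2 : ∀ {a b : C} (g g' : a ⟶ b), P₁.map g = P₁.map g' → P₂.map g = P₂.map g' →
      g = g' := by
    intro a b g g' h1 h2
    apply hFaith.map_injective
    apply CommaMorphism.ext
    · exact h1
    · exact h2
  refine ⟨q_inverts φ hE, ?_⟩
  intro X R₁ R₂ ψ hinv
  obtain ⟨hψeq, hψmap⟩ := hinv
  have hmk : ∀ x : ↑X, Quotient.mk (eSetoid φ hE) (R₁.obj x) =
      Quotient.mk (eSetoid φ hE) (R₂.obj x) :=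
    fun x => congrArg (fun F : ↑X ⥤ ECat φ hE => F.obj x) hψeq
  have hrel : ∀ x : ↑X, ERel P₁ P₂ (R₁.obj x) (R₂.obj x) := by
    intro x
    exact Quotient.exact (hmk x)
  have psi_theta : ∀ x : ↑X, ψ.hom.app x = theta φ (hrel x) := by
    intro x
    have h0 : theta φ (rel_out_mk φ hE (R₁.obj x)) ≫ ψ.hom.app x ≫
        theta φ (rel_mk_out φ hE (R₂.obj x)) =
        eqToHom (congrArg Quotient.out (hmk x)) := by
      have h1 := hψmap x
      rw [qF_map] at h1
      rw [induced_eqToHom] at h1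
      exact congrArg InducedCategory.Hom.hom h1
    have hq12 : ERel P₁ P₂ ((Quotient.mk (eSetoid φ hE) (R₁.obj x)).out)
        ((Quotient.mk (eSetoid φ hE) (R₂.obj x)).out) :=
      erel_trans φ hE (rel_out_mk φ hE (R₁.obj x))
        (erel_trans φ hE (hrel x) (rel_mk_out φ hE (R₂.obj x)))
    have hmid2 : ERel P₁ P₂ ((Quotient.mk (eSetoid φ hE) (R₁.obj x)).out) (R₂.obj x) :=
      erel_trans φ hE hq12 (rel_out_mk φ hE (R₂.obj x))
    calc ψ.hom.app x
        = (theta φ (rel_mk_out φ hE (R₁.obj x)) ≫ theta φ (rel_out_mk φ hE (R₁.obj x))) ≫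
            ψ.hom.app x ≫ (theta φ (rel_mk_out φ hE (R₂.obj x)) ≫
              theta φ (rel_out_mk φ hE (R₂.obj x))) := by
          rw [theta_inv φ hE _ _, theta_inv φ hE _ _]; simp
      _ = theta φ (rel_mk_out φ hE (R₁.obj x)) ≫ (theta φ (rel_out_mk φ hE (R₁.obj x)) ≫
            ψ.hom.app x ≫ theta φ (rel_mk_out φ hE (R₂.obj x))) ≫
              theta φ (rel_out_mk φ hE (R₂.obj x)) := by
          simp only [Category.assoc]
      _ = theta φ (rel_mk_out φ hE (R₁.obj x)) ≫ eqToHom (congrArg Quotient.out (hmk x)) ≫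
            theta φ (rel_out_mk φ hE (R₂.obj x)) := by rw [h0]
      _ = theta φ (hrel x) := by
          rw [← theta_eqToHom φ hE hq12 (congrArg Quotient.out (hmk x))]
          rw [theta_trans φ hE hq12 (rel_out_mk φ hE (R₂.obj x)) hmid2]
          rw [theta_trans φ hE (rel_mk_out φ hE (R₁.obj x)) hmid2 (hrel x)]
  classical
  set u0 : ↑X → C := fun x => (hrel x).choose with hu0def
  have e₁ : ∀ x : ↑X, P₁.obj (u0 x) = R₁.obj x := fun x => (hrel x).choose_spec.1
  have e₂ : ∀ x : ↑X, P₂.obj (u0 x) = R₂.obj x := fun x => (hrel x).choose_spec.2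
  have phix : ∀ x : ↑X, φ.hom.app (u0 x) =
      eqToHom (e₁ x) ≫ ψ.hom.app x ≫ eqToHom (e₂ x).symm := by
    intro x
    rw [psi_theta x]
    show φ.hom.app ((hrel x).choose) = _
    simp only [theta]
    simp [eqToHom_trans, eqToHom_trans_assoc]
  have sqw : ∀ {x y : ↑X} (f : x ⟶ y),
      (eqToHom (e₁ x) ≫ R₁.map f ≫ eqToHom (e₁ y).symm) ≫ φ.hom.app (u0 y) =
        φ.hom.app (u0 x) ≫ (eqToHom (e₂ x) ≫ R₂.map f ≫ eqToHom (e₂ y).symm) := by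
    intro x y f
    rw [phix x, phix y]
    simp only [Category.assoc, eqToHom_trans, eqToHom_trans_assoc, eqToHom_self,
      Category.id_comp]
    rw [ψ.hom.naturality_assoc]
  have hmapex : ∀ {x y : ↑X} (f : x ⟶ y), ∃ g : u0 x ⟶ u0 y,
      P₁.map g = eqToHom (e₁ x) ≫ R₁.map f ≫ eqToHom (e₁ y).symm ∧
      P₂.map g = eqToHom (e₂ x) ≫ R₂.map f ≫ eqToHom (e₂ y).symm := by
    intro x y f
    obtain ⟨g, hg⟩ := hFull.map_surjective
      (Arrow.homMk (u := eqToHom (e₁ x) ≫ R₁.map f ≫ eqToHom (e₁ y).symm)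
        (v := eqToHom (e₂ x) ≫ R₂.map f ≫ eqToHom (e₂ y).symm) (sqw f))
    exact ⟨g, congrArg CommaMorphism.left hg, congrArg CommaMorphism.right hg⟩
  let u : ↑X ⥤ C := {
    obj := u0
    map := fun {x y} f => (hmapex f).choose
    map_id := fun x => by
      refine ext2 _ _ ?_ ?_
      · rw [(hmapex (𝟙 x)).choose_spec.1]
        simp
      · rw [(hmapex (𝟙 x)).choose_spec.2]
        simp
    map_comp := fun {x y z} f g => by
      refine ext2 _ _ ?_ ?_
      · rw [(hmapex (f ≫ g)).choose_spec.1]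
        show _ = P₁.map ((hmapex f).choose ≫ (hmapex g).choose)
        rw [P₁.map_comp, (hmapex f).choose_spec.1, (hmapex g).choose_spec.1]
        simp
      · rw [(hmapex (f ≫ g)).choose_spec.2]
        show _ = P₂.map ((hmapex f).choose ≫ (hmapex g).choose)
        rw [P₂.map_comp, (hmapex f).choose_spec.2, (hmapex g).choose_spec.2]
        simp }
  have h₁ : u ⋙ P₁ = R₁ :=
    CategoryTheory.Functor.ext e₁ (fun x y f => (hmapex f).choose_spec.1)
  have h₂ : u ⋙ P₂ = R₂ :=
    CategoryTheory.Functor.ext e₂ (fun x y f => (hmapex f).choose_spec.2)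
  refine ⟨u, ⟨h₁, h₂, fun x => phix x⟩, ?_⟩
  rintro u' ⟨h₁', h₂', hcond'⟩
  have e₁' : ∀ x : ↑X, P₁.obj (u'.obj x) = R₁.obj x :=
    fun x => congrArg (fun F : ↑X ⥤ D => F.obj x) h₁'
  have e₂' : ∀ x : ↑X, P₂.obj (u'.obj x) = R₂.obj x :=
    fun x => congrArg (fun F : ↑X ⥤ D => F.obj x) h₂'
  have hobjeq : ∀ x : ↑X, u'.obj x = u0 x := by
    intro x
    refine hInj (sq_to_arrow_eq _ _ ((e₁' x).trans (e₁ x).symm) ((e₂' x).trans (e₂ x).symm) ?_)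
    rw [hcond' x, phix x]
    simp only [Category.assoc, eqToHom_trans, eqToHom_trans_assoc]
  refine CategoryTheory.Functor.ext hobjeq ?_
  intro x y f
  refine ext2 _ _ ?_ ?_
  · calc P₁.map (u'.map f) = eqToHom (e₁' x) ≫ R₁.map f ≫ eqToHom (e₁' y).symm :=
        Functor.congr_hom h₁' f
      _ = P₁.map (eqToHom (hobjeq x) ≫ u.map f ≫ eqToHom (hobjeq y).symm) := by
        show _ = P₁.map (eqToHom (hobjeq x) ≫ (hmapex f).choose ≫ eqToHom (hobjeq y).symm)
        simp only [Functor.map_comp, eqToHom_map, (hmapex f).choose_spec.1,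
          Category.assoc, eqToHom_trans_assoc, eqToHom_trans]
  · calc P₂.map (u'.map f) = eqToHom (e₂' x) ≫ R₂.map f ≫ eqToHom (e₂' y).symm :=
        Functor.congr_hom h₂' f
      _ = P₂.map (eqToHom (hobjeq x) ≫ u.map f ≫ eqToHom (hobjeq y).symm) := by
        show _ = P₂.map (eqToHom (hobjeq x) ≫ (hmapex f).choose ≫ eqToHom (hobjeq y).symm)
        simp only [Functor.map_comp, eqToHom_map, (hmapex f).choose_spec.2,
          Category.assoc, eqToHom_trans_assoc, eqToHom_trans]

end Forward14

/-- in `Cat`, an invertible 2-cell `φ : π₁ ⇒ π₂ : C ⟶ D` is an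
equivalence 2-relation iff it is an acyclic isokernel cell, i.e. the isokernel cell of
some retract equivalence `q : D ⟶ E`, with the identifier of `φ` equal to the equalizer
of `π₁` and `π₂`. -/
theorem statement14 (P₁ P₂ : C ⥤ D) (φ : P₁ ≅ P₂) :
    IsEquiv2Relation P₁ P₂ φ ↔
      ∃ (E : Cat.{u, u}) (q : D ⥤ ↑E), IsRetractEquiv q ∧
        IsIsokernelCell q P₁ P₂ φ ∧ IsAcyclic2 P₁ P₂ φ := by
  constructor
  · intro hE
    exact ⟨Cat.of (ECat φ hE), qF φ hE, retract14 φ hE, q_isokernel φ hE, hE.2.2.2.2⟩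
  · rintro ⟨E, q, -, hik, hac⟩
    exact backward14 P₁ P₂ φ q hik hac

end Statement14

end Paper
end
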